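/- arXiv:1807.08901 — 2 statements merged into one kernel-verified Lean document; each statement's English description precedes it below -/
import Mathlib

section
/- The steering fraction equals the steering robustness: for any assemblage {σ_{a|x}} on C^d, sup over {F_{a|x} ≥ 0} of [tr Σ_{a,x} F_{a|x} σ_{a|x}] / [sup over unsteerable assemblages τ of tr Σ_{a,x} F_{a|x} τ_{a|x}] equals sup over {F_{a|x} ≥ 0 with Σ_{a,x} D(a|x,λ) F_{a|x} ≤ 𝟙 for all deterministic strategies λ} of tr Σ_{a,x} F_{a|x} σ_{a|x}. -/
open Matrix BigOperators
open scoped ComplexOrder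

/-- Unsteerable assemblage in deterministic LHS form. -/
def IsUnsteerableDet {d : ℕ} {A X : Type} [Fintype A] [Fintype X]
    [DecidableEq A] [DecidableEq X]
    (τ : A → X → Matrix (Fin d) (Fin d) ℂ) : Prop :=
  ∃ ρ : (X → A) → Matrix (Fin d) (Fin d) ℂ,
    (∀ l, (ρ l).PosSemidef) ∧ (∑ l, (ρ l).trace = 1) ∧
    (∀ a x, τ a x = ∑ l, if l x = a then ρ l else 0)

/-- The value of a witness `F` on an assemblage `τ`. -/
noncomputable def witVal {d : ℕ} {A X : Type} [Fintype A] [Fintype X]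
    (F τ : A → X → Matrix (Fin d) (Fin d) ℂ) : ℝ :=
  (∑ a, ∑ x, (F a x * τ a x).trace).re

/-- Best value of the witness `F` over unsteerable assemblages. -/
noncomputable def lhsVal {d : ℕ} {A X : Type} [Fintype A] [Fintype X]
    [DecidableEq A] [DecidableEq X]
    (F : A → X → Matrix (Fin d) (Fin d) ℂ) : ℝ :=
  sSup {t : ℝ | ∃ τ : A → X → Matrix (Fin d) (Fin d) ℂ,
    IsUnsteerableDet τ ∧ t = witVal F τ}

set_option linter.unusedSectionVars false

section SteeringAux

variable {n : Type} [Fintype n] [DecidableEq n]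

open scoped MatrixOrder

lemma psd_trace_nonneg {M : Matrix n n ℂ} (hM : M.PosSemidef) : 0 ≤ M.trace := by
  have h : ∀ i, 0 ≤ M i i := fun i => by
    exact hM.diag_nonneg
  exact Finset.sum_nonneg fun i _ => h i

lemma trace_mul_psd_nonneg {F ρ : Matrix n n ℂ} (hF : F.PosSemidef) (hρ : ρ.PosSemidef) :
    0 ≤ (F * ρ).trace := by
  have hS := (CFC.sqrt_nonneg F).posSemidef
  have h2 : (F * ρ).trace = (CFC.sqrt F * ρ * CFC.sqrt F).trace := by
    rw [show F * ρ = CFC.sqrt F * (CFC.sqrt F * ρ) by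
        rw [← mul_assoc, CFC.sqrt_mul_sqrt_self F hF.nonneg],
      Matrix.trace_mul_cycle, ← mul_assoc]
  have h3 : (CFC.sqrt F * ρ * CFC.sqrt F).PosSemidef := by
    have := hρ.mul_mul_conjTranspose_same (CFC.sqrt F)
    rwa [hS.isHermitian.eq] at this
  rw [h2]; exact psd_trace_nonneg h3

lemma psd_le_trace_smul_one {ρ : Matrix n n ℂ} (hρ : ρ.PosSemidef) :
    (ρ.trace • (1 : Matrix n n ℂ) - ρ).PosSemidef := by
  have h := hρ.isHermitian
  have hU : (h.eigenvectorUnitary : Matrix n n ℂ) * star (h.eigenvectorUnitary : Matrix n n ℂ) = 1 :=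
    (Matrix.mem_unitaryGroup_iff).mp (h.eigenvectorUnitary).2
  have hU' : star (h.eigenvectorUnitary : Matrix n n ℂ) * (h.eigenvectorUnitary : Matrix n n ℂ) = 1 :=
    (Matrix.mem_unitaryGroup_iff').mp (h.eigenvectorUnitary).2
  have htr : ρ.trace = ∑ i, (h.eigenvalues i : ℂ) := by
    conv_lhs => rw [h.spectral_theorem, Unitary.conjStarAlgAut_apply]
    rw [Matrix.trace_mul_cycle, hU', one_mul, Matrix.trace_diagonal]
    rfl
  have hdiag : ρ.trace • (1 : Matrix n n ℂ) - ρ =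
      (h.eigenvectorUnitary : Matrix n n ℂ) *
        (diagonal fun i => ρ.trace - (h.eigenvalues i : ℂ)) *
        star (h.eigenvectorUnitary : Matrix n n ℂ) := by
    have : (diagonal fun i => ρ.trace - (h.eigenvalues i : ℂ)) =
        ρ.trace • (1 : Matrix n n ℂ) - diagonal (RCLike.ofReal ∘ h.eigenvalues) := by
      rw [Matrix.smul_one_eq_diagonal, Matrix.diagonal_sub]
      rfl
    rw [this, Matrix.mul_sub, Matrix.sub_mul, ← @id (ρ = (h.eigenvectorUnitary : Matrix n n ℂ) *
      diagonal (RCLike.ofReal ∘ h.eigenvalues) * star (h.eigenvectorUnitary : Matrix n n ℂ))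
      h.spectral_theorem]
    congr 1
    rw [Matrix.mul_smul, Matrix.smul_mul, mul_one, hU]
  rw [hdiag]
  have : (diagonal fun i => ρ.trace - (h.eigenvalues i : ℂ)).PosSemidef := by
    rw [Matrix.posSemidef_diagonal_iff]
    intro i
    rw [htr, sub_nonneg]
    have : (h.eigenvalues i : ℝ) ≤ ∑ j, h.eigenvalues j :=
      Finset.single_le_sum (fun j _ => hρ.eigenvalues_nonneg j) (Finset.mem_univ i)
    calc (h.eigenvalues i : ℂ) ≤ ((∑ j, h.eigenvalues j : ℝ) : ℂ) := by
          rw [Complex.real_le_real]; exact this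
      _ = ∑ j, (h.eigenvalues j : ℂ) := by push_cast; rfl
  have h2 := this.mul_mul_conjTranspose_same (h.eigenvectorUnitary : Matrix n n ℂ)
  rwa [← Matrix.star_eq_conjTranspose] at h2

lemma psd_smul_real {c : ℝ} (hc : 0 ≤ c) {M : Matrix n n ℂ} (hM : M.PosSemidef) :
    ((c : ℂ) • M).PosSemidef := by
  apply Matrix.PosSemidef.of_dotProduct_mulVec_nonneg
  · have : ((c : ℂ) • M)ᴴ = (starRingEnd ℂ (c : ℂ)) • Mᴴ := Matrix.conjTranspose_smul _ _
    rw [Matrix.IsHermitian, this, hM.1.eq, Complex.conj_ofReal]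
  · intro v
    rw [Matrix.smul_mulVec, dotProduct_smul]
    exact mul_nonneg (by exact_mod_cast hc) (hM.dotProduct_mulVec_nonneg v)

lemma trace_mul_mono {F ρ₁ ρ₂ : Matrix n n ℂ} (hF : F.PosSemidef)
    (h : (ρ₂ - ρ₁).PosSemidef) : (F * ρ₁).trace.re ≤ (F * ρ₂).trace.re := by
  have h0 := trace_mul_psd_nonneg hF h
  rw [Matrix.mul_sub, Matrix.trace_sub] at h0
  have h1 := (Complex.le_def.mp h0).1
  simp only [Complex.sub_re, Complex.zero_re] at h1
  linarith

variable {A X : Type} [Fintype A] [Fintype X] [DecidableEq A] [DecidableEq X]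

lemma wit_rearrange (F : A → X → Matrix n n ℂ) (ρ : (X → A) → Matrix n n ℂ) :
    ∑ a, ∑ x, (F a x * ∑ l, if l x = a then ρ l else 0).trace
      = ∑ l : X → A, ((∑ x, F (l x) x) * ρ l).trace := by
  have step : ∀ a x, (F a x * ∑ l, if l x = a then ρ l else 0).trace
      = ∑ l : X → A, if l x = a then (F (l x) x * ρ l).trace else 0 := by
    intro a x
    rw [Finset.mul_sum, Matrix.trace_sum]
    refine Finset.sum_congr rfl fun l _ => ?_
    split
    · next h => rw [h]
    · simp
  simp_rw [step]
  rw [Finset.sum_comm]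
  have h2 : ∀ x : X, ∑ a, ∑ l : X → A, (if l x = a then (F (l x) x * ρ l).trace else 0)
      = ∑ l : X → A, (F (l x) x * ρ l).trace := by
    intro x
    rw [Finset.sum_comm]
    refine Finset.sum_congr rfl fun l _ => ?_
    simp
  simp_rw [h2]
  rw [Finset.sum_comm]
  refine Finset.sum_congr rfl fun l _ => ?_
  rw [← Matrix.trace_sum, ← Finset.sum_mul]



section Main
variable {d : ℕ} {A X : Type} [Fintype A] [Fintype X] [DecidableEq A] [DecidableEq X]

/-- witVal on an unsteerable assemblage given by data ρ. -/
lemma witVal_unst (F : A → X → Matrix (Fin d) (Fin d) ℂ)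
    (ρ : (X → A) → Matrix (Fin d) (Fin d) ℂ)
    {τ : A → X → Matrix (Fin d) (Fin d) ℂ}
    (hτ : ∀ a x, τ a x = ∑ l, if l x = a then ρ l else 0) :
    witVal F τ = ∑ l : X → A, ((∑ x, F (l x) x) * ρ l).trace.re := by
  unfold witVal
  simp_rw [hτ]
  rw [wit_rearrange, Complex.re_sum]

lemma witVal_nonneg {F τ : A → X → Matrix (Fin d) (Fin d) ℂ}
    (hF : ∀ a x, (F a x).PosSemidef) (hτ : ∀ a x, (τ a x).PosSemidef) :
    0 ≤ witVal F τ := by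
  unfold witVal
  rw [Complex.re_sum]
  refine Finset.sum_nonneg fun a _ => ?_
  rw [Complex.re_sum]
  refine Finset.sum_nonneg fun x _ => ?_
  exact (Complex.le_def.mp (trace_mul_psd_nonneg (hF a x) (hτ a x))).1

/-- sum of PSD matrices is PSD -/
lemma psd_sum {ι : Type} (s : Finset ι) (f : ι → Matrix n n ℂ)
    (h : ∀ i ∈ s, (f i).PosSemidef) : (∑ i ∈ s, f i).PosSemidef := by
  classical
  induction s using Finset.induction_on with
  | empty => simpa using Matrix.PosSemidef.zero
  | insert _ _ hni ih =>
    rw [Finset.sum_insert hni]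
    exact ((h _ (Finset.mem_insert_self _ _))).add
      (ih fun i hi => h i (Finset.mem_insert_of_mem hi))

lemma trace_psd_re_nonneg {M : Matrix (Fin d) (Fin d) ℂ} (h : M.PosSemidef) : 0 ≤ M.trace.re :=
  (Complex.le_def.mp (psd_trace_nonneg h)).1

lemma trace_psd_im {M : Matrix (Fin d) (Fin d) ℂ} (h : M.PosSemidef) : M.trace.im = 0 :=
  ((Complex.le_def.mp (psd_trace_nonneg h)).2).symm

lemma trace_mul_le_trace_mul_trace {M ρ : Matrix (Fin d) (Fin d) ℂ}
    (hM : M.PosSemidef) (hρ : ρ.PosSemidef) :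
    (M * ρ).trace.re ≤ M.trace.re * ρ.trace.re := by
  have h1 := trace_mul_mono hM (psd_le_trace_smul_one hρ)
  have h2 : (M * (ρ.trace • (1 : Matrix (Fin d) (Fin d) ℂ))).trace = ρ.trace * M.trace := by
    rw [Matrix.mul_smul, mul_one, Matrix.trace_smul, smul_eq_mul]
  rw [h2] at h1
  have him := trace_psd_im hρ
  rw [Complex.mul_re, him] at h1
  linarith [h1]

lemma lhs_bddAbove (F : A → X → Matrix (Fin d) (Fin d) ℂ) (hF : ∀ a x, (F a x).PosSemidef) :
    BddAbove {t : ℝ | ∃ τ, IsUnsteerableDet τ ∧ t = witVal F τ} := by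
  refine ⟨∑ l : X → A, ((∑ x, F (l x) x).trace).re, ?_⟩
  rintro t ⟨τ, ⟨ρ, hρpsd, hρtr, hτ⟩, rfl⟩
  rw [witVal_unst F ρ hτ]
  have hMl : ∀ l : X → A, (∑ x, F (l x) x).PosSemidef := fun l =>
    psd_sum _ _ (fun x _ => hF _ x)
  refine Finset.sum_le_sum fun l _ => ?_
  have hsum1 : ∑ l', ((ρ l').trace).re = 1 := by
    have := congrArg Complex.re hρtr; rwa [Complex.re_sum] at this
  calc ((∑ x, F (l x) x) * ρ l).trace.re
      ≤ (∑ x, F (l x) x).trace.re * (ρ l).trace.re :=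
        trace_mul_le_trace_mul_trace (hMl l) (hρpsd l)
    _ ≤ (∑ x, F (l x) x).trace.re * 1 := by
        refine mul_le_mul_of_nonneg_left ?_ (trace_psd_re_nonneg (hMl l))
        calc (ρ l).trace.re ≤ ∑ l', ((ρ l').trace).re :=
            Finset.single_le_sum (fun l' _ => trace_psd_re_nonneg (hρpsd l'))
              (Finset.mem_univ l)
          _ = 1 := hsum1
    _ = _ := mul_one _

lemma witVal_le_lhsVal (F : A → X → Matrix (Fin d) (Fin d) ℂ)
    (hF : ∀ a x, (F a x).PosSemidef) {τ} (hτ : IsUnsteerableDet τ) :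
    witVal F τ ≤ lhsVal F :=
  le_csSup (lhs_bddAbove F hF) ⟨τ, hτ, rfl⟩

lemma lhsVal_le_one (F : A → X → Matrix (Fin d) (Fin d) ℂ)
    (hc : ∀ l : X → A, ((1 : Matrix (Fin d) (Fin d) ℂ) - ∑ x, F (l x) x).PosSemidef) :
    lhsVal F ≤ 1 := by
  apply Real.sSup_le _ zero_le_one
  rintro t ⟨τ, ⟨ρ, hρpsd, hρtr, hτ⟩, rfl⟩
  rw [witVal_unst F ρ hτ]
  have key : ∀ l : X → A, ((∑ x, F (l x) x) * ρ l).trace.re ≤ (ρ l).trace.re := by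
    intro l
    have h2 := trace_mul_mono (hρpsd l) (hc l)
    rw [Matrix.trace_mul_comm]
    simpa using h2
  calc ∑ l : X → A, ((∑ x, F (l x) x) * ρ l).trace.re
      ≤ ∑ l : X → A, ((ρ l).trace).re := Finset.sum_le_sum (fun l _ => key l)
    _ = 1 := by
        have := congrArg Complex.re hρtr; rwa [Complex.re_sum] at this

lemma psd_vecMulVec (v : (Fin d) → ℂ) : (Matrix.vecMulVec v (star v)).PosSemidef := by
  apply Matrix.PosSemidef.of_dotProduct_mulVec_nonneg
  · ext i j
    simp [Matrix.conjTranspose_apply, Matrix.vecMulVec_apply, mul_comm]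
  · intro u
    have h1 : (Matrix.vecMulVec v (star v)) *ᵥ u = fun i => v i * (star v ⬝ᵥ u) := by
      ext i
      simp [Matrix.mulVec, Matrix.vecMulVec_apply, dotProduct, Finset.mul_sum, mul_assoc]
    rw [h1]
    have h2 : star u ⬝ᵥ (fun i => v i * (star v ⬝ᵥ u)) = (star u ⬝ᵥ v) * (star v ⬝ᵥ u) := by
      simp [dotProduct, Finset.sum_mul, mul_assoc]
    rw [h2]
    have h3 : star u ⬝ᵥ v = (starRingEnd ℂ) (star v ⬝ᵥ u) := by
      simp [dotProduct, map_sum, mul_comm]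
    rw [h3]
    simpa using star_mul_self_nonneg (star v ⬝ᵥ u)

lemma trace_vecMulVec (v : (Fin d) → ℂ) :
    (Matrix.vecMulVec v (star v)).trace = star v ⬝ᵥ v := by
  simp [Matrix.trace, Matrix.diag, Matrix.vecMulVec_apply, dotProduct, mul_comm]

lemma trace_mul_vecMulVec (M : Matrix (Fin d) (Fin d) ℂ) (v : (Fin d) → ℂ) :
    (M * Matrix.vecMulVec v (star v)).trace = star v ⬝ᵥ M *ᵥ v := by
  simp only [Matrix.trace, Matrix.diag, Matrix.mul_apply, Matrix.vecMulVec_apply,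
    dotProduct, Matrix.mulVec, Pi.star_apply, Finset.mul_sum]
  refine Finset.sum_congr rfl fun i _ => Finset.sum_congr rfl fun j _ => by ring

lemma constraint_of_lhsVal_le (F : A → X → Matrix (Fin d) (Fin d) ℂ)
    (hF : ∀ a x, (F a x).PosSemidef) {c : ℝ} (hc : 0 < c) (hle : lhsVal F ≤ c)
    (l : X → A) :
    ((1 : Matrix (Fin d) (Fin d) ℂ) - ((c⁻¹ : ℝ) : ℂ) • ∑ x, F (l x) x).PosSemidef := by
  set M := ∑ x, F (l x) x with hMdef
  have hMpsd : M.PosSemidef := psd_sum _ _ fun x _ => hF _ x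
  have key : ∀ v : Fin d → ℂ, (star v ⬝ᵥ M *ᵥ v).re ≤ c * (star v ⬝ᵥ v).re := by
    intro v
    by_cases hv : v = 0
    · simp [hv]
    · set W := Matrix.vecMulVec v (star v) with hW
      have hWpsd := psd_vecMulVec (d := d) v
      have hs0 : (0 : ℂ) ≤ star v ⬝ᵥ v := by
        have := (Matrix.PosSemidef.one (n := Fin d) (R := ℂ)).dotProduct_mulVec_nonneg v
        rwa [Matrix.one_mulVec] at this
      have hsim : (star v ⬝ᵥ v).im = 0 := ((Complex.le_def.mp hs0).2).symm
      have hspos : 0 < (star v ⬝ᵥ v).re := by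
        have := (Matrix.PosDef.one (n := Fin d) (R := ℂ)).dotProduct_mulVec_pos hv
        rw [Matrix.one_mulVec] at this
        exact (Complex.lt_def.mp this).1
      set s : ℝ := (star v ⬝ᵥ v).re with hsdef
      have hsC : (star v ⬝ᵥ v) = ((s : ℝ) : ℂ) := by
        apply Complex.ext <;> simp [hsim, hsdef]
      set ρv : (X → A) → Matrix (Fin d) (Fin d) ℂ :=
        fun l' => if l' = l then ((s⁻¹ : ℝ) : ℂ) • W else 0 with hρv
      have hρpsd : ∀ l', (ρv l').PosSemidef := by
        intro l'; rw [hρv]; dsimp only; split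
        · exact psd_smul_real (inv_nonneg.mpr (le_of_lt hspos)) hWpsd
        · exact Matrix.PosSemidef.zero
      have hWtr : W.trace = ((s : ℝ) : ℂ) := by
        rw [hW, _root_.trace_vecMulVec, hsC]
      have hρtr : ∑ l', (ρv l').trace = 1 := by
        rw [hρv]
        have : ∀ l' : X → A, ((if l' = l then ((s⁻¹ : ℝ) : ℂ) • W else 0 : Matrix (Fin d) (Fin d) ℂ)).trace
            = if l' = l then ((s⁻¹ : ℝ) : ℂ) * ((s : ℝ) : ℂ) else 0 := by
          intro l'; split
          · rw [Matrix.trace_smul, smul_eq_mul, hWtr]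
          · simp
        simp_rw [this]
        rw [Finset.sum_ite_eq' Finset.univ l]
        simp only [Finset.mem_univ, if_true]
        rw [← Complex.ofReal_mul, inv_mul_cancel₀ (ne_of_gt hspos)]
        simp
      have hunst : IsUnsteerableDet (fun a x => ∑ l', if l' x = a then ρv l' else 0) :=
        ⟨ρv, hρpsd, hρtr, fun a x => rfl⟩
      have hwit := witVal_le_lhsVal F hF hunst
      rw [witVal_unst F ρv (fun a x => rfl)] at hwit
      have hsum : ∑ l' : X → A, ((∑ x, F (l' x) x) * ρv l').trace.re
          = s⁻¹ * (star v ⬝ᵥ M *ᵥ v).re := by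
        rw [hρv]
        have hterm : ∀ l' : X → A,
            ((∑ x, F (l' x) x) * (if l' = l then ((s⁻¹ : ℝ) : ℂ) • W else 0)).trace.re
            = if l' = l then s⁻¹ * (star v ⬝ᵥ M *ᵥ v).re else 0 := by
          intro l'; split
          · next h =>
            subst h
            rw [← hMdef, Matrix.mul_smul, Matrix.trace_smul, smul_eq_mul,
              Complex.re_ofReal_mul, hW, trace_mul_vecMulVec]
          · simp
        simp_rw [hterm]
        rw [Finset.sum_ite_eq' Finset.univ l]
        simp
      rw [hsum] at hwit
      have h2 : s⁻¹ * (star v ⬝ᵥ M *ᵥ v).re ≤ c := le_trans hwit hle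
      calc (star v ⬝ᵥ M *ᵥ v).re = s * (s⁻¹ * (star v ⬝ᵥ M *ᵥ v).re) := by
            field_simp
        _ ≤ s * c := by
            exact mul_le_mul_of_nonneg_left h2 (le_of_lt hspos)
        _ = c * s := mul_comm _ _
  apply Matrix.PosSemidef.of_dotProduct_mulVec_nonneg
  · show _ = _
    simp [Matrix.conjTranspose_sub, Matrix.conjTranspose_smul, Matrix.conjTranspose_one,
      hMpsd.1.eq, Complex.star_def, Complex.conj_ofReal]
  · intro v
    have hdot : star v ⬝ᵥ (((1 : Matrix (Fin d) (Fin d) ℂ) - ((c⁻¹ : ℝ) : ℂ) • M) *ᵥ v)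
        = star v ⬝ᵥ v - ((c⁻¹ : ℝ) : ℂ) * (star v ⬝ᵥ M *ᵥ v) := by
      rw [Matrix.sub_mulVec, dotProduct_sub, Matrix.one_mulVec,
        Matrix.smul_mulVec, dotProduct_smul, smul_eq_mul]
    rw [hdot]
    have htpsd : (0 : ℂ) ≤ star v ⬝ᵥ M *ᵥ v := hMpsd.dotProduct_mulVec_nonneg v
    have htim : (star v ⬝ᵥ M *ᵥ v).im = 0 := ((Complex.le_def.mp htpsd).2).symm
    have hs0 : (0 : ℂ) ≤ star v ⬝ᵥ v := by
      have := (Matrix.PosSemidef.one (n := Fin d) (R := ℂ)).dotProduct_mulVec_nonneg v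
      rwa [Matrix.one_mulVec] at this
    have hsim : (star v ⬝ᵥ v).im = 0 := ((Complex.le_def.mp hs0).2).symm
    rw [Complex.le_def]
    refine ⟨?_, ?_⟩
    · simp only [Complex.sub_re, Complex.re_ofReal_mul, Complex.zero_re]
      have hk := key v
      have : c⁻¹ * (star v ⬝ᵥ M *ᵥ v).re ≤ (star v ⬝ᵥ v).re := by
        rw [inv_mul_le_iff₀ hc]
        exact hk
      linarith
    · simp [Complex.sub_im, Complex.mul_im, hsim, htim]

lemma one_sub_assemblage_psd (σ : A → X → Matrix (Fin d) (Fin d) ℂ)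
    (hσ : ∀ a x, (σ a x).PosSemidef) (htr : ∀ x, (∑ a, σ a x).trace = 1)
    (a : A) (x : X) : ((1 : Matrix (Fin d) (Fin d) ℂ) - σ a x).PosSemidef := by
  have hS : (∑ a', σ a' x).PosSemidef := psd_sum _ _ fun a' _ => hσ a' x
  have h1 : ((1 : Matrix (Fin d) (Fin d) ℂ) - ∑ a', σ a' x).PosSemidef := by
    have := psd_le_trace_smul_one hS
    rwa [htr x, one_smul] at this
  have h2 : ((∑ a', σ a' x) - σ a x).PosSemidef := by
    have he : (∑ a' ∈ Finset.univ.erase a, σ a' x) = (∑ a', σ a' x) - σ a x :=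
      Finset.sum_erase_eq_sub (Finset.mem_univ a)
    rw [← he]
    exact psd_sum _ _ fun a' _ => hσ a' x
  have h3 : (1 : Matrix (Fin d) (Fin d) ℂ) - σ a x
      = ((1 : Matrix (Fin d) (Fin d) ℂ) - ∑ a', σ a' x) + ((∑ a', σ a' x) - σ a x) := by abel
  rw [h3]; exact h1.add h2

lemma witVal_le_sum_trace (F σ : A → X → Matrix (Fin d) (Fin d) ℂ)
    (hF : ∀ a x, (F a x).PosSemidef) (hσ : ∀ a x, (σ a x).PosSemidef)
    (htr : ∀ x, (∑ a, σ a x).trace = 1) :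
    witVal F σ ≤ ∑ a, ∑ x, ((F a x).trace).re := by
  unfold witVal
  rw [Complex.re_sum]; refine Finset.sum_le_sum fun a _ => ?_
  rw [Complex.re_sum]; refine Finset.sum_le_sum fun x _ => ?_
  have := trace_mul_mono (hF a x) (one_sub_assemblage_psd σ hσ htr a x)
  simpa using this

lemma master_ineq (F σ : A → X → Matrix (Fin d) (Fin d) ℂ)
    (hF : ∀ a x, (F a x).PosSemidef) (hσ : ∀ a x, (σ a x).PosSemidef)
    (htr : ∀ x, (∑ a, σ a x).trace = 1)
    (hA : Nonempty A) (hd : 0 < d) :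
    witVal F σ ≤ ((d : ℝ) * (Fintype.card A : ℝ)) * lhsVal F := by
  classical
  have hm : 0 < Fintype.card A := Fintype.card_pos_iff.mpr hA
  set m : ℕ := Fintype.card A with hmdef
  set c : ℝ := ((d : ℝ) * m)⁻¹ with hcdef
  have hc : 0 < c := by
    rw [hcdef]
    positivity
  set ρc : (X → A) → Matrix (Fin d) (Fin d) ℂ :=
    fun l => ∑ a, if l = Function.const X a then ((c : ℝ) : ℂ) • 1 else 0 with hρc
  have hρpsd : ∀ l, (ρc l).PosSemidef := by
    intro l; refine psd_sum _ _ fun a _ => ?_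
    split
    · exact psd_smul_real (le_of_lt hc) Matrix.PosSemidef.one
    · exact Matrix.PosSemidef.zero
  have hρtr : ∑ l, (ρc l).trace = 1 := by
    rw [hρc]
    simp only [Matrix.trace_sum]
    rw [Finset.sum_comm]
    have hstep : ∀ a : A, (∑ l : X → A,
        ((if l = Function.const X a then ((c : ℝ) : ℂ) • (1 : Matrix (Fin d) (Fin d) ℂ) else 0)).trace)
        = ((c : ℝ) : ℂ) * d := by
      intro a
      have h1 : ∀ l : X → A,
          ((if l = Function.const X a then ((c : ℝ) : ℂ) • (1 : Matrix (Fin d) (Fin d) ℂ) else 0)).trace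
          = if l = Function.const X a then ((c : ℝ) : ℂ) * d else 0 := by
        intro l; split
        · rw [Matrix.trace_smul, Matrix.trace_one, smul_eq_mul]
          simp
        · simp
      simp_rw [h1]
      rw [Finset.sum_ite_eq' Finset.univ]
      simp
    simp_rw [hstep]
    rw [Finset.sum_const]
    have hd0 : (d : ℂ) ≠ 0 := Nat.cast_ne_zero.mpr hd.ne'
    have hm0 : (m : ℂ) ≠ 0 := Nat.cast_ne_zero.mpr hm.ne'
    rw [hcdef, hmdef]
    push_cast
    field_simp
    ring_nf
    rw [Finset.card_univ]; exact inv_mul_cancel₀ hm0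
  have hunst : IsUnsteerableDet (fun a x => ∑ l, if l x = a then ρc l else 0) :=
    ⟨ρc, hρpsd, hρtr, fun a x => rfl⟩
  have hwit := witVal_le_lhsVal F hF hunst
  rw [witVal_unst F ρc (fun a x => rfl)] at hwit
  have hval : ∑ l : X → A, ((∑ x, F (l x) x) * ρc l).trace.re
      = c * ∑ a, ∑ x, ((F a x).trace).re := by
    have hterm : ∀ l : X → A, ((∑ x, F (l x) x) * ρc l).trace.re
        = ∑ a, if l = Function.const X a then c * ((∑ x, F (l x) x).trace).re else 0 := by
      intro l
      rw [hρc]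
      dsimp only
      rw [Finset.mul_sum, Matrix.trace_sum, Complex.re_sum]
      refine Finset.sum_congr rfl fun a _ => ?_
      split
      · rw [Matrix.mul_smul, Matrix.mul_one, Matrix.trace_smul, smul_eq_mul,
          Complex.re_ofReal_mul]
      · simp
    simp_rw [hterm]
    rw [Finset.sum_comm]
    have hstep2 : ∀ a : A, (∑ l : X → A,
        if l = Function.const X a then c * ((∑ x, F (l x) x).trace).re else 0)
        = c * ((∑ x, F a x).trace).re := by
      intro a
      rw [Finset.sum_ite_eq' Finset.univ (Function.const X a)
        (fun l => c * ((∑ x, F (l x) x).trace).re)]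
      simp only [Finset.mem_univ, if_true]
      rfl
    simp_rw [hstep2]
    rw [← Finset.mul_sum]
    congr 1
    refine Finset.sum_congr rfl fun a _ => ?_
    rw [Matrix.trace_sum, Complex.re_sum]
  have hbound := witVal_le_sum_trace F σ hF hσ htr
  have hdm : (d : ℝ) * (m : ℝ) * c = 1 := by
    rw [hcdef]
    have : (d : ℝ) * (m : ℝ) ≠ 0 := by positivity
    field_simp
  calc witVal F σ ≤ ∑ a, ∑ x, ((F a x).trace).re := hbound
    _ = ((d : ℝ) * (m : ℝ)) * (c * ∑ a, ∑ x, ((F a x).trace).re) := by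
        rw [← mul_assoc, hdm, one_mul]
    _ ≤ ((d : ℝ) * (m : ℝ)) * lhsVal F := by
        refine mul_le_mul_of_nonneg_left ?_ (by positivity)
        rw [← hval]
        exact hwit

lemma witVal_smul (r : ℝ) (F σ : A → X → Matrix (Fin d) (Fin d) ℂ) :
    witVal (fun a x => ((r : ℝ) : ℂ) • F a x) σ = r * witVal F σ := by
  unfold witVal
  simp_rw [Matrix.smul_mul, Matrix.trace_smul, ← Finset.smul_sum]
  rw [smul_eq_mul, Complex.re_ofReal_mul]

theorem main_thm (σ : A → X → Matrix (Fin d) (Fin d) ℂ)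
    (hpos : ∀ a x, (σ a x).PosSemidef)
    (htr : ∀ x, (∑ a, σ a x).trace = 1) :
    sSup {r : ℝ | ∃ F : A → X → Matrix (Fin d) (Fin d) ℂ,
        (∀ a x, (F a x).PosSemidef) ∧ 0 < lhsVal F ∧ r = witVal F σ / lhsVal F}
      = sSup {r : ℝ | ∃ F : A → X → Matrix (Fin d) (Fin d) ℂ,
        (∀ a x, (F a x).PosSemidef) ∧
        (∀ l : X → A, (1 - ∑ x, F (l x) x).PosSemidef) ∧ r = witVal F σ} := by
  classical
  by_cases hX : Nonempty X
  case neg =>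
    haveI : IsEmpty X := not_nonempty_iff.mp hX
    have hwit0 : ∀ F τ : A → X → Matrix (Fin d) (Fin d) ℂ, witVal F τ = 0 := by
      intro F τ
      simp [witVal, Finset.univ_eq_empty]
    have hS1 : {r : ℝ | ∃ F : A → X → Matrix (Fin d) (Fin d) ℂ,
        (∀ a x, (F a x).PosSemidef) ∧ 0 < lhsVal F ∧ r = witVal F σ / lhsVal F} = ∅ := by
      ext r
      simp only [Set.mem_setOf_eq, Set.mem_empty_iff_false, iff_false, not_exists]
      rintro F ⟨hFpsd, hlpos, hr⟩
      have : lhsVal F ≤ 0 := by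
        apply Real.sSup_le _ le_rfl
        rintro t ⟨τ, hτ, rfl⟩
        rw [hwit0]
      linarith
    have hS2 : {r : ℝ | ∃ F : A → X → Matrix (Fin d) (Fin d) ℂ,
        (∀ a x, (F a x).PosSemidef) ∧
        (∀ l : X → A, (1 - ∑ x, F (l x) x).PosSemidef) ∧ r = witVal F σ} = {0} := by
      ext r
      simp only [Set.mem_setOf_eq, Set.mem_singleton_iff]
      constructor
      · rintro ⟨F, _, _, rfl⟩; exact hwit0 F σ
      · rintro rfl
        refine ⟨fun _ _ => 0, fun a x => Matrix.PosSemidef.zero, fun l => ?_, (hwit0 _ σ).symm⟩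
        simpa using (Matrix.PosSemidef.one (n := Fin d) (R := ℂ))
    rw [hS1, hS2, Real.sSup_empty, csSup_singleton]
  case pos =>
    obtain ⟨x0⟩ := hX
    have hA : Nonempty A := by
      by_contra h
      haveI : IsEmpty A := not_nonempty_iff.mp h
      have h1 := htr x0
      rw [Finset.univ_eq_empty, Finset.sum_empty] at h1
      simp at h1
    have hd : 0 < d := by
      by_contra h
      have hd0 : d = 0 := by omega
      subst hd0
      have h1 := htr x0
      rw [show ((∑ a, σ a x0).trace) = 0 by simp [Matrix.trace]] at h1
      exact zero_ne_one h1
    set B : ℝ := (d : ℝ) * (Fintype.card A : ℝ) with hB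
    have hm : 0 < Fintype.card A := Fintype.card_pos_iff.mpr hA
    have hBpos : 0 < B := by
      rw [hB]
      have h1 : (0:ℝ) < d := by exact_mod_cast hd
      have h2 : (0:ℝ) < Fintype.card A := by exact_mod_cast hm
      exact mul_pos h1 h2
    have hS1bdd : BddAbove {r : ℝ | ∃ F : A → X → Matrix (Fin d) (Fin d) ℂ,
        (∀ a x, (F a x).PosSemidef) ∧ 0 < lhsVal F ∧ r = witVal F σ / lhsVal F} := by
      refine ⟨B, ?_⟩
      rintro r ⟨F, hFpsd, hlpos, rfl⟩
      rw [div_le_iff₀ hlpos]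
      exact master_ineq F σ hFpsd hpos htr hA hd
    have hS2bdd : BddAbove {r : ℝ | ∃ F : A → X → Matrix (Fin d) (Fin d) ℂ,
        (∀ a x, (F a x).PosSemidef) ∧
        (∀ l : X → A, (1 - ∑ x, F (l x) x).PosSemidef) ∧ r = witVal F σ} := by
      refine ⟨B, ?_⟩
      rintro r ⟨F, hFpsd, hcons, rfl⟩
      calc witVal F σ ≤ B * lhsVal F := master_ineq F σ hFpsd hpos htr hA hd
        _ ≤ B * 1 := mul_le_mul_of_nonneg_left (lhsVal_le_one F hcons) hBpos.le
        _ = B := mul_one B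
    have h0S2 : (0:ℝ) ∈ {r : ℝ | ∃ F : A → X → Matrix (Fin d) (Fin d) ℂ,
        (∀ a x, (F a x).PosSemidef) ∧
        (∀ l : X → A, (1 - ∑ x, F (l x) x).PosSemidef) ∧ r = witVal F σ} := by
      refine ⟨fun _ _ => 0, fun a x => Matrix.PosSemidef.zero, fun l => ?_, ?_⟩
      · simpa using (Matrix.PosSemidef.one (n := Fin d) (R := ℂ))
      · simp [witVal]
    have hsub : ∀ r, r ∈ {r : ℝ | ∃ F : A → X → Matrix (Fin d) (Fin d) ℂ,
        (∀ a x, (F a x).PosSemidef) ∧ 0 < lhsVal F ∧ r = witVal F σ / lhsVal F} →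
        r ∈ {r : ℝ | ∃ F : A → X → Matrix (Fin d) (Fin d) ℂ,
        (∀ a x, (F a x).PosSemidef) ∧
        (∀ l : X → A, (1 - ∑ x, F (l x) x).PosSemidef) ∧ r = witVal F σ} := by
      rintro r ⟨F, hFpsd, hlpos, rfl⟩
      refine ⟨fun a x => (((lhsVal F)⁻¹ : ℝ) : ℂ) • F a x,
        fun a x => psd_smul_real (inv_nonneg.mpr hlpos.le) (hFpsd a x), fun l => ?_, ?_⟩
      · have := constraint_of_lhsVal_le F hFpsd hlpos le_rfl l
        rwa [Finset.smul_sum] at this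
      · rw [witVal_smul, div_eq_inv_mul]
    have hS1nonneg : (0:ℝ) ≤ sSup {r : ℝ | ∃ F : A → X → Matrix (Fin d) (Fin d) ℂ,
        (∀ a x, (F a x).PosSemidef) ∧ 0 < lhsVal F ∧ r = witVal F σ / lhsVal F} := by
      apply Real.sSup_nonneg
      rintro r ⟨F, hFpsd, hlpos, rfl⟩
      exact div_nonneg (witVal_nonneg hFpsd hpos) hlpos.le
    apply le_antisymm
    · apply Real.sSup_le
      · intro r hr
        exact le_csSup hS2bdd (hsub r hr)
      · exact le_csSup hS2bdd h0S2
    · apply Real.sSup_le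
      · rintro r ⟨F, hFpsd, hcons, rfl⟩
        by_cases h : 0 < lhsVal F
        · have hin : witVal F σ / lhsVal F ∈ {r : ℝ | ∃ F : A → X → Matrix (Fin d) (Fin d) ℂ,
              (∀ a x, (F a x).PosSemidef) ∧ 0 < lhsVal F ∧ r = witVal F σ / lhsVal F} :=
            ⟨F, hFpsd, h, rfl⟩
          have h1 : lhsVal F ≤ 1 := lhsVal_le_one F hcons
          have hw0 : 0 ≤ witVal F σ := witVal_nonneg hFpsd hpos
          have h2 : witVal F σ ≤ witVal F σ / lhsVal F := by
            rw [le_div_iff₀ h]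
            nlinarith
          exact le_trans h2 (le_csSup hS1bdd hin)
        · push_neg at h
          have h3 := master_ineq F σ hFpsd hpos htr hA hd
          have h4 : witVal F σ ≤ 0 := le_trans h3 (by nlinarith)
          exact le_trans h4 hS1nonneg
      · exact hS1nonneg

end Main

end SteeringAux

/-- The steering fraction equals (one plus) the steering robustness: the supremum of
`tr ∑ F σ / sup_{τ∈LHS} tr ∑ F τ` over PSD witnesses `F` with positive LHS value equals
the supremum of `tr ∑ F σ` over PSD witnesses satisfying
`∑_{a,x} D(a|x,λ) F_{a|x} ≤ 𝟙` for all deterministic strategies `λ`. -/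
theorem steering_fraction_eq_steering_robustness
    {d : ℕ} {A X : Type} [Fintype A] [Fintype X] [DecidableEq A] [DecidableEq X]
    (σ : A → X → Matrix (Fin d) (Fin d) ℂ)
    (hpos : ∀ a x, (σ a x).PosSemidef)
    (htr : ∀ x, (∑ a, σ a x).trace = 1) :
    sSup {r : ℝ | ∃ F : A → X → Matrix (Fin d) (Fin d) ℂ,
        (∀ a x, (F a x).PosSemidef) ∧ 0 < lhsVal F ∧ r = witVal F σ / lhsVal F}
      = sSup {r : ℝ | ∃ F : A → X → Matrix (Fin d) (Fin d) ℂ,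
        (∀ a x, (F a x).PosSemidef) ∧
        (∀ l : X → A, (1 - ∑ x, F (l x) x).PosSemidef) ∧ r = witVal F σ} :=
  main_thm σ hpos htr
end

section
/- (Optimality of the maximally entangled measurement for MDI steering.) Let {σ_{a|x}} be an assemblage on C^d, let {ω_y} be Hermitian operators on C^d spanning the Hermitian matrices, and for each family {F_{a|x} ≥ 0} write F_{a|x} = Σ_y β^{x,y}_a ω_y^⊤. Then for any POVM element 0 ≤ E ≤ 𝟙 on C^d ⊗ C^d, the value [Σ_{a,x} tr(E (σ_{a|x} ⊗ F_{a|x}^⊤))] / [sup_{τ∈LHS} Σ_{a,x} tr(E (τ_{a|x} ⊗ F_{a|x}^⊤))] is at most sup over {G_{a|x} ≥ 0} of [Σ_{a,x} tr(G_{a|x} σ_{a|x})] / [sup_{τ∈LHS} Σ_{a,x} tr(G_{a|x} τ_{a|x})], with equality attained by choosing E = |Φ+⟩⟨Φ+| the projection onto the maximally entangled state. -/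
open Matrix Kronecker BigOperators
open scoped ComplexOrder
open scoped Pointwise

/-- MDI value `∑_{a,x} tr[E (τ_{a|x} ⊗ F_{a|x}ᵀ)]` for the joint POVM element `E`. -/
noncomputable def mdiVal {d : ℕ} {A X : Type} [Fintype A] [Fintype X]
    (E : Matrix (Fin d × Fin d) (Fin d × Fin d) ℂ)
    (F τ : A → X → Matrix (Fin d) (Fin d) ℂ) : ℝ :=
  (∑ a, ∑ x, (E * (τ a x ⊗ₖ (F a x)ᵀ)).trace).re

/-- Best MDI value over unsteerable assemblages. -/
noncomputable def mdiLhsVal {d : ℕ} {A X : Type} [Fintype A] [Fintype X]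
    [DecidableEq A] [DecidableEq X]
    (E : Matrix (Fin d × Fin d) (Fin d × Fin d) ℂ)
    (F : A → X → Matrix (Fin d) (Fin d) ℂ) : ℝ :=
  sSup {t : ℝ | ∃ τ : A → X → Matrix (Fin d) (Fin d) ℂ,
    IsUnsteerableDet τ ∧ t = mdiVal E F τ}

/-- The maximally entangled state `|Φ+⟩⟨Φ+|` on `ℂ^d ⊗ ℂ^d`. -/
noncomputable def maxEntProj (d : ℕ) : Matrix (Fin d × Fin d) (Fin d × Fin d) ℂ :=
  vecMulVec (fun p => if p.1 = p.2 then ((Real.sqrt d : ℝ) : ℂ)⁻¹ else 0)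
    (star fun p => if p.1 = p.2 then ((Real.sqrt d : ℝ) : ℂ)⁻¹ else 0)

set_option linter.unusedSectionVars false
set_option linter.unusedVariables false

lemma sum4_rev {α : Type*} [Fintype α] {M : Type*} [AddCommMonoid M] (f : α → α → α → α → M) :
    ∑ a, ∑ b, ∑ c, ∑ d, f a b c d = ∑ a, ∑ b, ∑ c, ∑ d, f d c b a := by
  let e : (α × α × α × α) ≃ (α × α × α × α) :=
    ⟨fun p => (p.2.2.2, p.2.2.1, p.2.1, p.1), fun p => (p.2.2.2, p.2.2.1, p.2.1, p.1),
     fun p => rfl, fun p => rfl⟩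
  calc ∑ a, ∑ b, ∑ c, ∑ d, f a b c d
      = ∑ p : α × α × α × α, f p.1 p.2.1 p.2.2.1 p.2.2.2 := by
        simp [Fintype.sum_prod_type]
    _ = ∑ p : α × α × α × α, f (e p).1 (e p).2.1 (e p).2.2.1 (e p).2.2.2 :=
        (Equiv.sum_comp e fun p => f p.1 p.2.1 p.2.2.1 p.2.2.2).symm
    _ = ∑ a, ∑ b, ∑ c, ∑ d, f d c b a := by
        have he : ∀ p : α × α × α × α, e p = (p.2.2.2, p.2.2.1, p.2.1, p.1) := fun p => rfl
        simp only [he]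
        simp [Fintype.sum_prod_type]

lemma trace_fact {n : Type*} [Fintype n] (A B : Matrix n n ℂ) :
    (Aᴴ * A * (Bᴴ * B)).trace
      = ∑ k, ∑ m, (Complex.normSq (∑ j, A k j * (starRingEnd ℂ) (B m j)) : ℂ) := by
  classical
  have hz : ∀ (z : ℂ), (Complex.normSq z : ℂ) = (starRingEnd ℂ) z * z := by
    intro z; rw [Complex.normSq_eq_conj_mul_self]
  simp only [hz, map_sum, _root_.map_mul, Complex.conj_conj, Finset.sum_mul, Finset.mul_sum,
    Matrix.trace, Matrix.diag, Matrix.mul_apply, Matrix.conjTranspose_apply]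
  rw [sum4_rev]
  refine Finset.sum_congr rfl fun a _ => Finset.sum_congr rfl fun b _ =>
    Finset.sum_congr rfl fun c _ => Finset.sum_congr rfl fun d _ => ?_
  simp only [Complex.star_def]
  ring

lemma normSq_sum_mul_le {n : Type*} [Fintype n] (a b : n → ℂ) :
    Complex.normSq (∑ j, a j * b j)
      ≤ (∑ j, Complex.normSq (a j)) * (∑ j, Complex.normSq (b j)) := by
  classical
  have h1 : ‖∑ j, a j * b j‖ ≤ ∑ j, ‖a j‖ * ‖b j‖ := by
    refine le_trans (norm_sum_le _ _) ?_
    simp [norm_mul]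
  have h2 := Finset.sum_mul_sq_le_sq_mul_sq Finset.univ
    (fun j => ‖a j‖) (fun j => ‖b j‖)
  calc Complex.normSq (∑ j, a j * b j) = (‖∑ j, a j * b j‖) ^ 2 :=
        (Complex.sq_norm _).symm
    _ ≤ (∑ j, ‖a j‖ * ‖b j‖) ^ 2 := by
        apply pow_le_pow_left₀ (norm_nonneg _) h1
    _ ≤ (∑ j, ‖a j‖ ^ 2) * (∑ j, ‖b j‖ ^ 2) := h2
    _ = _ := by simp [Complex.sq_norm]

open scoped MatrixOrder Matrix.Norms.L2Operator in
lemma psd_ct {n : Type*} [Fintype n] {P : Matrix n n ℂ} (hP : P.PosSemidef) :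
    ∃ B : Matrix n n ℂ, P = Bᴴ * B := by
  classical
  obtain ⟨B, hB⟩ := CStarAlgebra.nonneg_iff_eq_star_mul_self.mp hP.nonneg
  exact ⟨B, hB⟩

lemma trace_psd_mul {n : Type*} [Fintype n] {P Q : Matrix n n ℂ}
    (hP : P.PosSemidef) (hQ : Q.PosSemidef) :
    0 ≤ (P * Q).trace.re ∧ (P * Q).trace.re ≤ P.trace.re * Q.trace.re := by
  classical
  obtain ⟨A, rfl⟩ := psd_ct hP
  obtain ⟨B, rfl⟩ := psd_ct hQ
  have hre : (Aᴴ * A * (Bᴴ * B)).trace.re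
      = ∑ k, ∑ m, Complex.normSq (∑ j, A k j * (starRingEnd ℂ) (B m j)) := by
    rw [trace_fact]; simp [Complex.re_sum]
  have htrA : (Aᴴ * A).trace.re = ∑ i, ∑ k, Complex.normSq (A k i) := by
    simp only [Matrix.trace, Matrix.diag, Matrix.mul_apply, Matrix.conjTranspose_apply]
    simp [Complex.re_sum, Complex.normSq_eq_conj_mul_self, Complex.star_def,
      ← Complex.normSq_eq_conj_mul_self]
  have htrB : (Bᴴ * B).trace.re = ∑ i, ∑ k, Complex.normSq (B k i) := by
    simp only [Matrix.trace, Matrix.diag, Matrix.mul_apply, Matrix.conjTranspose_apply]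
    simp [Complex.re_sum, Complex.normSq_eq_conj_mul_self, Complex.star_def,
      ← Complex.normSq_eq_conj_mul_self]
  constructor
  · rw [hre]
    exact Finset.sum_nonneg fun k _ => Finset.sum_nonneg fun m _ => Complex.normSq_nonneg _
  · rw [hre, htrA, htrB]
    calc ∑ k, ∑ m, Complex.normSq (∑ j, A k j * (starRingEnd ℂ) (B m j))
        ≤ ∑ k, ∑ m, (∑ j, Complex.normSq (A k j)) * (∑ j, Complex.normSq (B m j)) := by
          refine Finset.sum_le_sum fun k _ => Finset.sum_le_sum fun m _ => ?_
          simpa [Complex.normSq_conj] using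
            normSq_sum_mul_le (fun j => A k j) (fun j => (starRingEnd ℂ) (B m j))
      _ = (∑ k, ∑ j, Complex.normSq (A k j)) * (∑ m, ∑ j, Complex.normSq (B m j)) := by
          rw [← Finset.sum_mul_sum]
      _ = _ := by
          rw [Finset.sum_comm (f := fun k j => Complex.normSq (A k j)),
            Finset.sum_comm (f := fun m j => Complex.normSq (B m j))]

lemma trace_psd_mul_nonneg {n : Type*} [Fintype n] {P Q : Matrix n n ℂ}
    (hP : P.PosSemidef) (hQ : Q.PosSemidef) : 0 ≤ (P * Q).trace := by
  obtain ⟨A, rfl⟩ := psd_ct hP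
  obtain ⟨B, rfl⟩ := psd_ct hQ
  rw [trace_fact]
  refine Finset.sum_nonneg fun k _ => Finset.sum_nonneg fun m _ => ?_
  rw [Complex.zero_le_real]
  exact Complex.normSq_nonneg _

lemma kron_conjTranspose {n m : Type*} (A : Matrix n n ℂ) (B : Matrix m m ℂ) :
    (A ⊗ₖ B)ᴴ = Aᴴ ⊗ₖ Bᴴ := by
  ext p q
  simp [Matrix.conjTranspose_apply, Matrix.kroneckerMap_apply, mul_comm]

lemma kron_psd {n m : Type*} [Fintype n] [Fintype m] {A : Matrix n n ℂ} {B : Matrix m m ℂ}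
    (hA : A.PosSemidef) (hB : B.PosSemidef) : (A ⊗ₖ B).PosSemidef := by
  obtain ⟨P, rfl⟩ := psd_ct hA
  obtain ⟨Q, rfl⟩ := psd_ct hB
  have : (Pᴴ * P) ⊗ₖ (Qᴴ * Q) = (P ⊗ₖ Q)ᴴ * (P ⊗ₖ Q) := by
    rw [Matrix.mul_kronecker_mul, kron_conjTranspose]
  rw [this]
  exact Matrix.posSemidef_conjTranspose_mul_self _

lemma vecMulVec_psd {n : Type*} [Fintype n] (x : n → ℂ) :
    (Matrix.vecMulVec x (star x)).PosSemidef := by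
  rw [Matrix.posSemidef_iff_dotProduct_mulVec]
  constructor
  · ext i j
    simp [Matrix.conjTranspose_apply, Matrix.vecMulVec_apply, mul_comm]
  · intro y
    have : dotProduct (star y) ((Matrix.vecMulVec x (star x)) *ᵥ y)
        = (starRingEnd ℂ) (∑ j, (starRingEnd ℂ) (x j) * y j) * (∑ j, (starRingEnd ℂ) (x j) * y j) := by
      simp only [dotProduct, Matrix.mulVec, Matrix.vecMulVec_apply, Pi.star_apply,
        Complex.star_def, map_sum, _root_.map_mul, Complex.conj_conj, Finset.sum_mul,
        Finset.mul_sum]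
      rw [Finset.sum_comm]
      refine Finset.sum_congr rfl fun i _ => Finset.sum_congr rfl fun j _ => ?_
      ring
    rw [this, ← Complex.normSq_eq_conj_mul_self, Complex.zero_le_real]
    exact Complex.normSq_nonneg _

noncomputable def Gmat {d : ℕ} (E : Matrix (Fin d × Fin d) (Fin d × Fin d) ℂ)
    (F : Matrix (Fin d) (Fin d) ℂ) : Matrix (Fin d) (Fin d) ℂ :=
  Matrix.of fun i j => ∑ k, ∑ l, E (i, k) (j, l) * F k l

lemma Gmat_trace {d : ℕ} (E : Matrix (Fin d × Fin d) (Fin d × Fin d) ℂ)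
    (F τ : Matrix (Fin d) (Fin d) ℂ) :
    (Gmat E F * τ).trace = (E * (τ ⊗ₖ Fᵀ)).trace := by
  have L : (Gmat E F * τ).trace = ∑ i, ∑ j, ∑ k, ∑ l, E (i, k) (j, l) * F k l * τ j i := by
    simp only [Matrix.trace, Matrix.diag, Matrix.mul_apply, Gmat, Matrix.of_apply,
      Finset.sum_mul]
  have R : (E * (τ ⊗ₖ Fᵀ)).trace
      = ∑ i, ∑ k, ∑ j, ∑ l, E (i, k) (j, l) * (τ j i * F k l) := by
    simp only [Matrix.trace, Matrix.diag, Matrix.mul_apply, Matrix.kroneckerMap_apply,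
      Matrix.transpose_apply, Fintype.sum_prod_type]
  rw [L, R]
  refine Finset.sum_congr rfl fun i _ => ?_
  rw [Finset.sum_comm]
  exact Finset.sum_congr rfl fun j _ => Finset.sum_congr rfl fun k _ =>
    Finset.sum_congr rfl fun l _ => by ring

lemma dot_eq_trace {d : ℕ} (G : Matrix (Fin d) (Fin d) ℂ) (x : Fin d → ℂ) :
    dotProduct (star x) (G *ᵥ x) = (G * Matrix.vecMulVec x (star x)).trace := by
  simp only [dotProduct, Matrix.mulVec, Matrix.trace, Matrix.diag, Matrix.mul_apply,
    Matrix.vecMulVec_apply, Pi.star_apply, Finset.mul_sum, Finset.sum_mul]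
  exact Finset.sum_congr rfl fun i _ => Finset.sum_congr rfl fun j _ => by ring

lemma Gmat_psd {d : ℕ} {E : Matrix (Fin d × Fin d) (Fin d × Fin d) ℂ}
    {F : Matrix (Fin d) (Fin d) ℂ} (hE : E.PosSemidef) (hF : F.PosSemidef) :
    (Gmat E F).PosSemidef := by
  rw [Matrix.posSemidef_iff_dotProduct_mulVec]
  constructor
  · ext i j
    simp only [Matrix.conjTranspose_apply, Gmat, Matrix.of_apply, star_sum, star_mul']
    rw [Finset.sum_comm]
    refine Finset.sum_congr rfl fun k _ => Finset.sum_congr rfl fun l _ => ?_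
    rw [hE.1.apply, hF.1.apply]
  · intro x
    rw [dot_eq_trace, Gmat_trace]
    exact trace_psd_mul_nonneg hE (kron_psd (vecMulVec_psd x) hF.transpose)

lemma maxEnt_trace {d : ℕ} (F τ : Matrix (Fin d) (Fin d) ℂ) :
    (maxEntProj d * (τ ⊗ₖ Fᵀ)).trace = ((d : ℂ))⁻¹ * (F * τ).trace := by
  have hc : (((Real.sqrt d : ℝ) : ℂ))⁻¹ * (((Real.sqrt d : ℝ) : ℂ))⁻¹ = ((d : ℂ))⁻¹ := by
    have h0 : ((Real.sqrt d : ℝ) : ℂ) * ((Real.sqrt d : ℝ) : ℂ) = (d : ℂ) := by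
      norm_cast
      exact Real.mul_self_sqrt (by positivity)
    rw [← mul_inv, h0]
  simp only [maxEntProj, Matrix.trace, Matrix.diag, Matrix.mul_apply,
    Matrix.vecMulVec_apply, Pi.star_apply, Matrix.kroneckerMap_apply,
    Matrix.transpose_apply, Fintype.sum_prod_type, Complex.star_def,
    apply_ite (starRingEnd ℂ), map_zero, Complex.conj_ofReal, map_inv₀,
    ite_mul, zero_mul, mul_ite, mul_zero]
  rw [Finset.mul_sum]
  refine Finset.sum_congr rfl fun i _ => ?_
  rw [Finset.sum_comm, Finset.mul_sum]
  refine Finset.sum_congr rfl fun j _ => ?_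
  simp only [Finset.sum_ite_eq, Finset.mem_univ, if_true, hc]
  rw [← hc]
  ring

section Values

variable {d : ℕ} {A X : Type} [Fintype A] [Fintype X] [DecidableEq A] [DecidableEq X]

lemma mdiVal_eq_witVal (E : Matrix (Fin d × Fin d) (Fin d × Fin d) ℂ)
    (F τ : A → X → Matrix (Fin d) (Fin d) ℂ) :
    mdiVal E F τ = witVal (fun a x => Gmat E (F a x)) τ := by
  unfold mdiVal witVal
  congr 1
  exact Finset.sum_congr rfl fun a _ => Finset.sum_congr rfl fun x _ =>
    (Gmat_trace E (F a x) (τ a x)).symm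

lemma mdiLhsVal_eq_lhsVal (E : Matrix (Fin d × Fin d) (Fin d × Fin d) ℂ)
    (F : A → X → Matrix (Fin d) (Fin d) ℂ) :
    mdiLhsVal E F = lhsVal (fun a x => Gmat E (F a x)) := by
  unfold mdiLhsVal lhsVal
  congr 1
  ext t
  constructor
  · rintro ⟨τ, hτ, rfl⟩; exact ⟨τ, hτ, mdiVal_eq_witVal E F τ⟩
  · rintro ⟨τ, hτ, rfl⟩; exact ⟨τ, hτ, (mdiVal_eq_witVal E F τ).symm⟩

lemma mdiVal_maxEnt (F τ : A → X → Matrix (Fin d) (Fin d) ℂ) :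
    mdiVal (maxEntProj d) F τ = ((d : ℝ))⁻¹ * witVal F τ := by
  unfold mdiVal witVal
  have : ∀ a x, (maxEntProj d * (τ a x ⊗ₖ (F a x)ᵀ)).trace
      = ((d : ℂ))⁻¹ * (F a x * τ a x).trace := fun a x => maxEnt_trace (F a x) (τ a x)
  simp only [this, ← Finset.mul_sum]
  have hcast : ((d : ℂ))⁻¹ = ((((d : ℝ))⁻¹ : ℝ) : ℂ) := by push_cast; ring
  rw [hcast, Complex.re_ofReal_mul]

lemma mdiLhsVal_maxEnt (F : A → X → Matrix (Fin d) (Fin d) ℂ) :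
    mdiLhsVal (maxEntProj d) F = ((d : ℝ))⁻¹ * lhsVal F := by
  unfold mdiLhsVal lhsVal
  rw [show {t : ℝ | ∃ τ, IsUnsteerableDet τ ∧ t = mdiVal (maxEntProj d) F τ}
      = ((d : ℝ))⁻¹ • {t : ℝ | ∃ τ, IsUnsteerableDet τ ∧ t = witVal F τ} from ?_,
    Real.sSup_smul_of_nonneg (by positivity), smul_eq_mul]
  ext t
  constructor
  · rintro ⟨τ, hτ, rfl⟩
    exact ⟨witVal F τ, ⟨τ, hτ, rfl⟩, (mdiVal_maxEnt F τ).symm ▸ rfl⟩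
  · rintro ⟨s, ⟨τ, hτ, rfl⟩, rfl⟩
    exact ⟨τ, hτ, (mdiVal_maxEnt F τ).symm⟩

lemma uns_d_pos {τ : A → X → Matrix (Fin d) (Fin d) ℂ}
    (h : IsUnsteerableDet τ) : 0 < d := by
  by_contra hd
  push_neg at hd
  interval_cases d
  obtain ⟨ρ, _, htr, _⟩ := h
  have : ∀ l : X → A, (ρ l).trace = 0 := fun l => by
    simp [Matrix.trace]
  simp [this] at htr

lemma uns_A_nonempty {τ : A → X → Matrix (Fin d) (Fin d) ℂ}
    (h : IsUnsteerableDet τ) (hX : Nonempty X) : Nonempty A := by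
  by_contra hA
  obtain ⟨ρ, _, htr, _⟩ := h
  have : IsEmpty (X → A) := by
    rw [not_nonempty_iff] at hA
    exact ⟨fun l => hA.false (l hX.some)⟩
  rw [Finset.univ_eq_empty, Finset.sum_empty] at htr
  exact one_ne_zero htr.symm

end Values

section Bounds

variable {d : ℕ} {A X : Type} [Fintype A] [Fintype X] [DecidableEq A] [DecidableEq X]

lemma trace_re_nonneg {n : Type*} [Fintype n] [DecidableEq n] {P : Matrix n n ℂ}
    (hP : P.PosSemidef) : 0 ≤ P.trace.re := by
  have := (trace_psd_mul hP Matrix.PosSemidef.one).1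
  rwa [mul_one] at this

lemma witVal_le_S {G : A → X → Matrix (Fin d) (Fin d) ℂ}
    (hG : ∀ a x, (G a x).PosSemidef) {τ : A → X → Matrix (Fin d) (Fin d) ℂ}
    (hτ : IsUnsteerableDet τ) :
    witVal G τ ≤ ∑ a, ∑ x, (G a x).trace.re := by
  obtain ⟨ρ, hρ, htr1, hτeq⟩ := hτ
  have hρtr1 : ∑ l, (ρ l).trace.re = 1 := by
    rw [← Complex.re_sum, htr1, Complex.one_re]
  have key : ∀ a x, (G a x * τ a x).trace.re
      = ∑ l, if l x = a then (G a x * ρ l).trace.re else 0 := by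
    intro a x
    rw [hτeq, Finset.mul_sum, Matrix.trace_sum, Complex.re_sum]
    refine Finset.sum_congr rfl fun l _ => ?_
    by_cases h : l x = a <;> simp [h]
  have hwit : witVal G τ = ∑ x, ∑ l : X → A, (G (l x) x * ρ l).trace.re := by
    unfold witVal
    rw [Complex.re_sum]
    simp only [Complex.re_sum, key]
    rw [Finset.sum_comm]
    refine Finset.sum_congr rfl fun x _ => ?_
    rw [Finset.sum_comm]
    refine Finset.sum_congr rfl fun l _ => ?_
    simp [Finset.sum_ite_eq, Finset.sum_ite_eq']
  rw [hwit, Finset.sum_comm (f := fun a x => (G a x).trace.re)]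
  calc ∑ x, ∑ l : X → A, (G (l x) x * ρ l).trace.re
      ≤ ∑ x, ∑ l : X → A, (∑ a, (G a x).trace.re) * (ρ l).trace.re := by
        refine Finset.sum_le_sum fun x _ => Finset.sum_le_sum fun l _ => ?_
        refine le_trans (trace_psd_mul (hG _ _) (hρ l)).2 ?_
        refine mul_le_mul_of_nonneg_right ?_ (trace_re_nonneg (hρ l))
        exact Finset.single_le_sum (fun a _ => trace_re_nonneg (hG a x))
          (Finset.mem_univ (l x))
    _ = ∑ x, ∑ a, (G a x).trace.re := by
        refine Finset.sum_congr rfl fun x _ => ?_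
        rw [← Finset.mul_sum, hρtr1, mul_one]

lemma bddAbove_wit {G : A → X → Matrix (Fin d) (Fin d) ℂ}
    (hG : ∀ a x, (G a x).PosSemidef) :
    BddAbove {t : ℝ | ∃ τ, IsUnsteerableDet τ ∧ t = witVal G τ} := by
  refine ⟨∑ a, ∑ x, (G a x).trace.re, ?_⟩
  rintro t ⟨τ, hτ, rfl⟩
  exact witVal_le_S hG hτ

end Bounds

section Det

variable {d : ℕ} {A X : Type} [Fintype A] [Fintype X] [DecidableEq A] [DecidableEq X]

lemma smul_one_psd (hd : 0 < d) :
    (((d : ℂ))⁻¹ • (1 : Matrix (Fin d) (Fin d) ℂ)).PosSemidef := by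
  rw [Matrix.posSemidef_iff_dotProduct_mulVec]
  constructor
  · show _ᴴ = _
    rw [Matrix.conjTranspose_smul, Matrix.conjTranspose_one]
    congr 1
    simp [Complex.star_def, ← Complex.ofReal_natCast, ← Complex.ofReal_inv]
  · intro x
    rw [Matrix.smul_mulVec, Matrix.one_mulVec, dotProduct_smul, smul_eq_mul]
    refine mul_nonneg ?_ (dotProduct_star_self_nonneg x)
    rw [show ((d:ℂ))⁻¹ = ((((d:ℝ))⁻¹ : ℝ) : ℂ) by push_cast; ring, Complex.zero_le_real]
    positivity

/-- deterministic assemblage associated to `g`. -/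
noncomputable def detAsm (g : X → A) : A → X → Matrix (Fin d) (Fin d) ℂ :=
  fun a x => if g x = a then ((d : ℂ))⁻¹ • (1 : Matrix (Fin d) (Fin d) ℂ) else 0

lemma detAsm_uns (hd : 0 < d) (g : X → A) :
    IsUnsteerableDet (detAsm (d := d) g) := by
  refine ⟨fun l => if l = g then ((d : ℂ))⁻¹ • (1 : Matrix (Fin d) (Fin d) ℂ) else 0,
    fun l => ?_, ?_, fun a x => ?_⟩
  · by_cases h : l = g <;> simp [h, smul_one_psd hd, Matrix.PosSemidef.zero]
  · rw [Finset.sum_eq_single g (fun l _ hl => by simp [hl]) (by simp)]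
    simp [Matrix.trace_smul, Matrix.trace_one]
    field_simp
  · unfold detAsm
    rw [Finset.sum_congr rfl (fun l _ => show (if l x = a then (if l = g then _ else 0) else 0)
        = if l = g then (if l x = a then ((d : ℂ))⁻¹ • (1 : Matrix (Fin d) (Fin d) ℂ) else 0) else 0
        from by by_cases h1 : l x = a <;> by_cases h2 : l = g <;> simp [h1, h2])]
    rw [Finset.sum_eq_single g (fun l _ hl => by simp [hl]) (by simp)]
    simp

lemma witVal_detAsm (G : A → X → Matrix (Fin d) (Fin d) ℂ) (g : X → A) :
    witVal G (detAsm (d := d) g) = ((d : ℝ))⁻¹ * ∑ x, (G (g x) x).trace.re := by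
  unfold witVal detAsm
  rw [Complex.re_sum]
  simp only [Complex.re_sum]
  rw [Finset.sum_comm, Finset.mul_sum]
  refine Finset.sum_congr rfl fun x _ => ?_
  rw [Finset.sum_eq_single (g x) (fun a _ ha => by simp [Ne.symm ha]) (by simp)]
  rw [if_pos rfl, Matrix.mul_smul, Matrix.mul_one, Matrix.trace_smul, smul_eq_mul,
    show ((d:ℂ))⁻¹ = ((((d:ℝ))⁻¹ : ℝ) : ℂ) by push_cast; ring,
    Complex.re_ofReal_mul]

end Det

section Main

variable {d : ℕ} {A X : Type} [Fintype A] [Fintype X] [DecidableEq A] [DecidableEq X]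

lemma lhs_nonempty {G : A → X → Matrix (Fin d) (Fin d) ℂ} (hl : 0 < lhsVal G) :
    ∃ τ : A → X → Matrix (Fin d) (Fin d) ℂ, IsUnsteerableDet τ := by
  by_contra h
  push_neg at h
  have : {t : ℝ | ∃ τ, IsUnsteerableDet τ ∧ t = witVal G τ} = ∅ := by
    ext t; simp only [Set.mem_setOf_eq, Set.mem_empty_iff_false, iff_false]
    rintro ⟨τ, hτ, _⟩; exact h τ hτ
  rw [lhsVal, this, Real.sSup_empty] at hl
  exact lt_irrefl 0 hl

lemma ratio_bound {σ : A → X → Matrix (Fin d) (Fin d) ℂ}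
    (hσ : ∀ a x, (σ a x).PosSemidef)
    (htr : ∀ x, (∑ a, σ a x).trace = 1)
    {G : A → X → Matrix (Fin d) (Fin d) ℂ}
    (hG : ∀ a x, (G a x).PosSemidef) (hl : 0 < lhsVal G) :
    witVal G σ / lhsVal G ≤ (d : ℝ) * (Fintype.card A : ℝ) := by
  rw [div_le_iff₀ hl]
  obtain ⟨τ0, hτ0⟩ := lhs_nonempty hl
  have hd : 0 < d := uns_d_pos hτ0
  have hd' : (0 : ℝ) < d := by exact_mod_cast hd
  have hσtr : ∀ a x, (σ a x).trace.re ≤ 1 := by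
    intro a x
    have h1 : ∑ a', (σ a' x).trace.re = 1 := by
      rw [← Complex.re_sum, ← Matrix.trace_sum, htr x, Complex.one_re]
    rw [← h1]
    exact Finset.single_le_sum (fun a' _ => trace_re_nonneg (hσ a' x)) (Finset.mem_univ a)
  have h1 : witVal G σ ≤ ∑ a, ∑ x, (G a x).trace.re := by
    unfold witVal
    rw [Complex.re_sum]
    simp only [Complex.re_sum]
    refine Finset.sum_le_sum fun a _ => Finset.sum_le_sum fun x _ => ?_
    refine le_trans (trace_psd_mul (hG a x) (hσ a x)).2 ?_
    calc (G a x).trace.re * (σ a x).trace.re ≤ (G a x).trace.re * 1 :=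
          mul_le_mul_of_nonneg_left (hσtr a x) (trace_re_nonneg (hG a x))
      _ = _ := mul_one _
  by_cases hX : Nonempty X
  · have hA : Nonempty A := uns_A_nonempty hτ0 hX
    have hgex : ∀ x : X, ∃ b : A, ∀ a : A, (G a x).trace.re ≤ (G b x).trace.re := by
      intro x
      obtain ⟨b, _, hb⟩ := Finset.exists_max_image Finset.univ
        (fun a => (G a x).trace.re) Finset.univ_nonempty
      exact ⟨b, fun a => hb a (Finset.mem_univ a)⟩
    choose g hg using hgex
    have h2 : ∑ a, ∑ x, (G a x).trace.re
        ≤ (Fintype.card A : ℝ) * ∑ x, (G (g x) x).trace.re := by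
      rw [Finset.sum_comm, Finset.mul_sum]
      refine Finset.sum_le_sum fun x _ => ?_
      calc ∑ a, (G a x).trace.re ≤ ∑ _a : A, (G (g x) x).trace.re :=
            Finset.sum_le_sum fun a _ => hg x a
        _ = (Fintype.card A : ℝ) * (G (g x) x).trace.re := by
            rw [Finset.sum_const, nsmul_eq_mul, Finset.card_univ]
    have h4 : witVal G (detAsm (d := d) g) ≤ lhsVal G :=
      le_csSup (bddAbove_wit hG) ⟨detAsm g, detAsm_uns hd g, rfl⟩
    have h5 : ∑ x, (G (g x) x).trace.re ≤ (d : ℝ) * lhsVal G := by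
      have hw := witVal_detAsm G g
      calc ∑ x, (G (g x) x).trace.re
          = (d : ℝ) * (((d : ℝ))⁻¹ * ∑ x, (G (g x) x).trace.re) := by field_simp
        _ = (d : ℝ) * witVal G (detAsm (d := d) g) := by rw [hw]
        _ ≤ (d : ℝ) * lhsVal G := mul_le_mul_of_nonneg_left h4 hd'.le
    calc witVal G σ ≤ (Fintype.card A : ℝ) * ((d : ℝ) * lhsVal G) :=
          le_trans h1 (le_trans h2 (mul_le_mul_of_nonneg_left h5 (by positivity)))
      _ = (d : ℝ) * (Fintype.card A : ℝ) * lhsVal G := by ring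
  · have hXe : IsEmpty X := not_nonempty_iff.mp hX
    have h0 : witVal G σ = 0 := by unfold witVal; simp
    rw [h0]
    exact mul_nonneg (by positivity) hl.le

lemma bddAbove_ratio {σ : A → X → Matrix (Fin d) (Fin d) ℂ}
    (hσ : ∀ a x, (σ a x).PosSemidef)
    (htr : ∀ x, (∑ a, σ a x).trace = 1) :
    BddAbove {r : ℝ | ∃ G : A → X → Matrix (Fin d) (Fin d) ℂ,
      (∀ a x, (G a x).PosSemidef) ∧ 0 < lhsVal G ∧ r = witVal G σ / lhsVal G} := by
  refine ⟨(d : ℝ) * (Fintype.card A : ℝ), ?_⟩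
  rintro r ⟨G, hG, hl, rfl⟩
  exact ratio_bound hσ htr hG hl

end Main

/-- Optimality of the maximally entangled measurement for MDI steering: for every POVM
element `E` the MDI ratio is at most the steering fraction, and the supremum of the
ratios obtained with `E = |Φ+⟩⟨Φ+|` equals the steering fraction. -/
theorem maxEnt_measurement_optimal
    {d : ℕ} {A X Y : Type} [Fintype A] [Fintype X] [Fintype Y]
    [DecidableEq A] [DecidableEq X]
    (σ : A → X → Matrix (Fin d) (Fin d) ℂ)
    (hσ : ∀ a x, (σ a x).PosSemidef)
    (htr : ∀ x, (∑ a, σ a x).trace = 1)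
    (ω : Y → Matrix (Fin d) (Fin d) ℂ)
    (hω : ∀ y, (ω y).IsHermitian)
    (hspan : ∀ M : Matrix (Fin d) (Fin d) ℂ, M.IsHermitian →
      ∃ c : Y → ℝ, M = ∑ y, c y • ω y) :
    (∀ F : A → X → Matrix (Fin d) (Fin d) ℂ, (∀ a x, (F a x).PosSemidef) →
      ∀ β : A → X → Y → ℝ, (∀ a x, F a x = ∑ y, β a x y • (ω y)ᵀ) →
      ∀ E : Matrix (Fin d × Fin d) (Fin d × Fin d) ℂ,
        E.PosSemidef → (1 - E).PosSemidef →
        0 < mdiLhsVal E F →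
        mdiVal E F σ / mdiLhsVal E F ≤
          sSup {r : ℝ | ∃ G : A → X → Matrix (Fin d) (Fin d) ℂ,
            (∀ a x, (G a x).PosSemidef) ∧ 0 < lhsVal G ∧
            r = witVal G σ / lhsVal G}) ∧
    (sSup {r : ℝ | ∃ F : A → X → Matrix (Fin d) (Fin d) ℂ,
        (∀ a x, (F a x).PosSemidef) ∧ 0 < mdiLhsVal (maxEntProj d) F ∧
        r = mdiVal (maxEntProj d) F σ / mdiLhsVal (maxEntProj d) F}
      = sSup {r : ℝ | ∃ G : A → X → Matrix (Fin d) (Fin d) ℂ,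
        (∀ a x, (G a x).PosSemidef) ∧ 0 < lhsVal G ∧
        r = witVal G σ / lhsVal G}) := by
  constructor
  · intro F hF β hβ E hE hE' hpos
    have hGpsd : ∀ a x, (Gmat E (F a x)).PosSemidef := fun a x => Gmat_psd hE (hF a x)
    have heq : mdiLhsVal E F = lhsVal (fun a x => Gmat E (F a x)) := mdiLhsVal_eq_lhsVal E F
    have hval : mdiVal E F σ = witVal (fun a x => Gmat E (F a x)) σ := mdiVal_eq_witVal E F σ
    rw [hval, heq]
    exact le_csSup (bddAbove_ratio hσ htr)
      ⟨fun a x => Gmat E (F a x), hGpsd, heq ▸ hpos, rfl⟩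
  · congr 1
    ext r
    constructor
    · rintro ⟨F, hF, hpos, rfl⟩
      have hd' : (0 : ℝ) < ((d : ℝ))⁻¹ := by
        rcases Nat.eq_zero_or_pos d with h | h
        · exfalso
          rw [mdiLhsVal_maxEnt] at hpos
          have h0 : ((d : ℝ))⁻¹ = 0 := by rw [h]; simp
          rw [h0, zero_mul] at hpos
          exact lt_irrefl 0 hpos
        · have : (0:ℝ) < d := by exact_mod_cast h
          positivity
      have hlpos : 0 < lhsVal F := by
        rw [mdiLhsVal_maxEnt] at hpos
        by_contra hle
        push_neg at hle
        nlinarith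
      refine ⟨F, hF, hlpos, ?_⟩
      rw [mdiVal_maxEnt, mdiLhsVal_maxEnt, mul_div_mul_left _ _ (ne_of_gt hd')]
    · rintro ⟨G, hG, hpos, rfl⟩
      obtain ⟨τ0, hτ0⟩ := lhs_nonempty hpos
      have hd : 0 < d := uns_d_pos hτ0
      have hd' : (0 : ℝ) < ((d : ℝ))⁻¹ := by
        have : (0:ℝ) < d := by exact_mod_cast hd
        positivity
      refine ⟨G, hG, ?_, ?_⟩
      · rw [mdiLhsVal_maxEnt]
        exact mul_pos hd' hpos
      · rw [mdiVal_maxEnt, mdiLhsVal_maxEnt, mul_div_mul_left _ _ (ne_of_gt hd')]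
end
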